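/- Let U ⊆ ℂⁿ be open and ρ : ℂⁿ → ℝ twice continuously differentiable on U with ‖∇ρ(z)‖ = 1 for all z ∈ U, where ∇ρ is the gradient with respect to the real inner product Re⟪·,·⟫ on ℂⁿ. Let z₀ ∈ U and w ∈ ℂⁿ satisfy Re⟪w, ∇ρ(z₀)⟫ = 0 and Re⟪i·w, ∇ρ(z₀)⟫ = 0 (i.e. w lies in the complex tangent space at z₀ of the level set of ρ through z₀). Then for every t ∈ ℝ such that z₀ + s·∇ρ(z₀) ∈ U for all s between 0 and t, one has Re⟪w, ∇ρ(z₀ + t·∇ρ(z₀))⟫ = 0 and Re⟪i·w, ∇ρ(z₀ + t·∇ρ(z₀))⟫ = 0; that is, w lies in the complex tangent space at z₀ + t·∇ρ(z₀) of the level set of ρ through that point. -/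

import Mathlib

/-!
STATEMENT 8: for ρ : ℂⁿ → ℝ of class C² on an open set U with ‖∇ρ‖ ≡ 1 (gradient with
respect to the real inner product Re⟪·,·⟫), if w lies in the complex tangent space at z₀ of
the level set of ρ (i.e. Re⟪w, ∇ρ(z₀)⟫ = 0 = Re⟪i·w, ∇ρ(z₀)⟫), then w lies in the complex
tangent space at z₀ + t·∇ρ(z₀) of the level set through that point, for every t such that
the segment stays in U.
-/

open Set

section Aux

variable {E : Type*} [NormedAddCommGroup E] [InnerProductSpace ℝ E] [CompleteSpace E]

local notation "⟪" x ", " y "⟫" => @inner ℝ E _ x y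

/-- Core lemma: the gradient of a `C²` function with unit gradient is constant along
the (parametrized) normal line, as long as the line stays in the open set. -/
lemma gradient_const_along_normal_aux {U : Set E} (hU : IsOpen U)
    {ρ : E → ℝ} (hρ : ContDiffOn ℝ 2 ρ U)
    (hgrad : ∀ z ∈ U, ‖gradient ρ z‖ = 1)
    {z₀ : E} (hz₀ : z₀ ∈ U) (c T : ℝ) (hT : 0 ≤ T)
    (hseg : ∀ s ∈ Icc (0:ℝ) T, z₀ + (c * s) • gradient ρ z₀ ∈ U) :
    gradient ρ (z₀ + (c * T) • gradient ρ z₀) = gradient ρ z₀ := by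
  set g : E → E := gradient ρ with hg
  set v : E := g z₀ with hv
  -- g is C¹ on U
  have hgC1 : ContDiffOn ℝ 1 g U := by
    have h1 : ContDiffOn ℝ 1 (fun x => fderiv ℝ ρ x) U :=
      hρ.fderiv_of_isOpen hU (by norm_num)
    exact ((InnerProductSpace.toDual ℝ E).symm.contDiff).comp_contDiffOn h1
  have hgdiff : ∀ z ∈ U, HasFDerivAt g (fderiv ℝ g z) z := fun z hz =>
    ((hgC1.differentiableOn one_ne_zero).differentiableAt (hU.mem_nhds hz)).hasFDerivAt
  -- the derivative of g is orthogonal to g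
  have horth : ∀ z ∈ U, ∀ a : E, ⟪fderiv ℝ g z a, g z⟫ = 0 := by
    intro z hz a
    have hF1 : HasFDerivAt (fun x => ⟪g x, g x⟫)
        ((fderivInnerCLM ℝ (g z, g z)).comp ((fderiv ℝ g z).prod (fderiv ℝ g z))) z :=
      (hgdiff z hz).inner ℝ (hgdiff z hz)
    have heq : (fun x : E => ⟪g x, g x⟫) =ᶠ[nhds z] fun _ => (1:ℝ) := by
      filter_upwards [hU.mem_nhds hz] with x hx
      rw [real_inner_self_eq_norm_sq, hgrad x hx]; norm_num
    have hF2 : HasFDerivAt (fun x => ⟪g x, g x⟫) (0 : E →L[ℝ] ℝ) z :=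
      (hasFDerivAt_const (1:ℝ) z).congr_of_eventuallyEq heq
    have h0 : ((fderivInnerCLM ℝ (g z, g z)).comp
        ((fderiv ℝ g z).prod (fderiv ℝ g z))) = 0 := hF1.unique hF2
    have := congrFun (congrArg DFunLike.coe h0) a
    simp only [ContinuousLinearMap.comp_apply, ContinuousLinearMap.prod_apply,
      fderivInnerCLM_apply, ContinuousLinearMap.zero_apply] at this
    have hcomm : ⟪g z, fderiv ℝ g z a⟫ = ⟪fderiv ℝ g z a, g z⟫ := real_inner_comm _ _
    linarith [this, hcomm]
  -- symmetry of the Hessian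
  have hsymm : ∀ z ∈ U, ∀ a b : E, ⟪fderiv ℝ g z a, b⟫ = ⟪a, fderiv ℝ g z b⟫ := by
    intro z hz a b
    have hct : ContDiffAt ℝ 2 ρ z := hρ.contDiffAt (hU.mem_nhds hz)
    have hsnd : IsSymmSndFDerivAt ℝ ρ z := hct.isSymmSndFDerivAt (by simp [minSmoothness_of_isRCLikeNormedField])
    -- identify fderiv ℝ g z with toDual.symm ∘ f''
    have hf'' : HasFDerivAt (fun x => fderiv ℝ ρ x) (fderiv ℝ (fderiv ℝ ρ) z) z := by
      have h1 : ContDiffOn ℝ 1 (fun x => fderiv ℝ ρ x) U :=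
        hρ.fderiv_of_isOpen hU (by norm_num)
      exact ((h1.differentiableOn one_ne_zero).differentiableAt (hU.mem_nhds hz)).hasFDerivAt
    have hcomp : HasFDerivAt g
        (((InnerProductSpace.toDual ℝ E).symm.toContinuousLinearEquiv :
            (E →L[ℝ] ℝ) ≃L[ℝ] E).toContinuousLinearMap.comp (fderiv ℝ (fderiv ℝ ρ) z)) z := by
      exact (((InnerProductSpace.toDual ℝ E).symm.toContinuousLinearEquiv :
            (E →L[ℝ] ℝ) ≃L[ℝ] E).toContinuousLinearMap.hasFDerivAt).comp z hf''
    have hEq : fderiv ℝ g z = ((InnerProductSpace.toDual ℝ E).symm.toContinuousLinearEquiv :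
            (E →L[ℝ] ℝ) ≃L[ℝ] E).toContinuousLinearMap.comp (fderiv ℝ (fderiv ℝ ρ) z) :=
      (hgdiff z hz).unique hcomp
    have key : ∀ x y : E, ⟪fderiv ℝ g z x, y⟫ = fderiv ℝ (fderiv ℝ ρ) z x y := by
      intro x y
      rw [hEq]
      simp only [ContinuousLinearMap.comp_apply]
      exact InnerProductSpace.toDual_symm_apply
    calc ⟪fderiv ℝ g z a, b⟫ = fderiv ℝ (fderiv ℝ ρ) z a b := key a b
      _ = fderiv ℝ (fderiv ℝ ρ) z b a := hsnd.eq a b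
      _ = ⟪fderiv ℝ g z b, a⟫ := (key b a).symm
      _ = ⟪a, fderiv ℝ g z b⟫ := real_inner_comm _ _
  have hHg0 : ∀ z ∈ U, fderiv ℝ g z (g z) = 0 := by
    intro z hz
    have h1 := hsymm z hz (fderiv ℝ g z (g z)) (g z)
    have h2 := horth z hz (fderiv ℝ g z (g z))
    exact inner_self_eq_zero.mp (by rw [← h1]; exact h2)
  -- the curve
  set γ : ℝ → E := fun s => z₀ + (c * s) • v with hγdef
  have hγderiv : ∀ s : ℝ, HasDerivAt γ (c • v) s := by
    intro s
    have h1 := ((hasDerivAt_id s).const_mul c).smul_const v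
    rw [mul_one] at h1
    exact h1.const_add z₀
  set f : ℝ → E := fun s => g (γ s) - v with hfdef
  have hγmem : ∀ s ∈ Icc (0:ℝ) T, γ s ∈ U := hseg
  have hf' : ∀ s ∈ Icc (0:ℝ) T, HasDerivAt f (fderiv ℝ g (γ s) (c • v)) s := by
    intro s hs
    exact (((hgdiff (γ s) (hγmem s hs)).comp_hasDerivAt s (hγderiv s))).sub_const v
  -- rewrite the derivative in terms of f
  have hf'eq : ∀ s ∈ Icc (0:ℝ) T, fderiv ℝ g (γ s) (c • v) = -(c • fderiv ℝ g (γ s) (f s)) := by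
    intro s hs
    have h0 : fderiv ℝ g (γ s) (g (γ s)) = 0 := hHg0 (γ s) (hγmem s hs)
    have : fderiv ℝ g (γ s) (f s) = fderiv ℝ g (γ s) (g (γ s)) - fderiv ℝ g (γ s) v := by
      simp [hfdef, map_sub]
    rw [map_smul]
    rw [this, h0]
    simp [smul_sub]
  -- bound on the Hessian along the curve
  obtain ⟨C, hC⟩ : ∃ C, ∀ s ∈ Icc (0:ℝ) T, ‖fderiv ℝ g (γ s)‖ ≤ C := by
    have hcont : ContinuousOn (fun s => fderiv ℝ g (γ s)) (Icc (0:ℝ) T) := by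
      have h1 : ContinuousOn (fderiv ℝ g) U := hgC1.continuousOn_fderiv_of_isOpen hU le_rfl
      have h2 : Continuous γ := by
        apply Continuous.add continuous_const
        exact (continuous_const.mul continuous_id).smul continuous_const
      exact h1.comp h2.continuousOn hγmem
    obtain ⟨C, hC⟩ := (isCompact_Icc).exists_bound_of_continuousOn hcont
    exact ⟨C, hC⟩
  set K : ℝ := |c| * max C 0 with hK
  have hbound : ∀ s ∈ Ico (0:ℝ) T, ‖fderiv ℝ g (γ s) (c • v)‖ ≤ K * ‖f s‖ + 0 := by
    intro s hs
    have hs' : s ∈ Icc (0:ℝ) T := Ico_subset_Icc_self hs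
    rw [hf'eq s hs', add_zero, norm_neg, norm_smul, Real.norm_eq_abs]
    have h1 : ‖fderiv ℝ g (γ s) (f s)‖ ≤ ‖fderiv ℝ g (γ s)‖ * ‖f s‖ :=
      (fderiv ℝ g (γ s)).le_opNorm (f s)
    have h2 : ‖fderiv ℝ g (γ s)‖ * ‖f s‖ ≤ max C 0 * ‖f s‖ :=
      mul_le_mul_of_nonneg_right ((hC s hs').trans (le_max_left _ _)) (norm_nonneg _)
    calc |c| * ‖fderiv ℝ g (γ s) (f s)‖ ≤ |c| * (max C 0 * ‖f s‖) :=
          mul_le_mul_of_nonneg_left (h1.trans h2) (abs_nonneg c)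
      _ = K * ‖f s‖ := by ring
  -- Grönwall
  have hfcont : ContinuousOn f (Icc (0:ℝ) T) := fun s hs =>
    (hf' s hs).continuousAt.continuousWithinAt
  have hgron := norm_le_gronwallBound_of_norm_deriv_right_le (δ := 0) (K := K) (ε := 0)
    hfcont (fun s hs => (hf' s (Ico_subset_Icc_self hs)).hasDerivWithinAt)
    (by simp [hfdef, hγdef, hv]) hbound
  have hT0 : ‖f T‖ ≤ gronwallBound 0 K 0 (T - 0) := hgron T ⟨hT, le_rfl⟩
  rw [gronwallBound_ε0] at hT0
  simp only [zero_mul] at hT0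
  have : f T = 0 := norm_le_zero_iff.mp (by linarith [hT0])
  have := sub_eq_zero.mp this
  simpa [hγdef] using this

end Aux

theorem complex_tangent_space_constant_along_normal {n : ℕ}
    {U : Set (EuclideanSpace ℂ (Fin n))} (hU : IsOpen U)
    (ρ : EuclideanSpace ℂ (Fin n) → ℝ) (hρ : ContDiffOn ℝ 2 ρ U)
    (hgrad : ∀ z ∈ U, ‖gradient ρ z‖ = 1)
    (z₀ : EuclideanSpace ℂ (Fin n)) (hz₀ : z₀ ∈ U)
    (w : EuclideanSpace ℂ (Fin n))
    (hw : (inner ℂ w (gradient ρ z₀) : ℂ).re = 0)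
    (hiw : (inner ℂ ((Complex.I : ℂ) • w) (gradient ρ z₀) : ℂ).re = 0)
    (t : ℝ) (hseg : ∀ s ∈ Set.uIcc (0 : ℝ) t, z₀ + s • gradient ρ z₀ ∈ U) :
    (inner ℂ w (gradient ρ (z₀ + t • gradient ρ z₀)) : ℂ).re = 0 ∧
    (inner ℂ ((Complex.I : ℂ) • w) (gradient ρ (z₀ + t • gradient ρ z₀)) : ℂ).re = 0 := by
  have hkey : gradient ρ (z₀ + t • gradient ρ z₀) = gradient ρ z₀ := by
    rcases le_total 0 t with ht | ht
    · have := gradient_const_along_normal_aux hU hρ hgrad hz₀ 1 t ht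
        (fun s hs => by
          rw [one_mul]
          exact hseg s (by rwa [Set.uIcc_of_le ht]))
      simpa using this
    · have := gradient_const_along_normal_aux hU hρ hgrad hz₀ (-1) (-t) (by linarith)
        (fun s hs => by
          have : (-1 : ℝ) * s = -s := by ring
          rw [this]
          apply hseg
          rw [Set.uIcc_of_ge ht]
          constructor <;> [linarith [hs.2]; linarith [hs.1]])
      have h1 : (-1 : ℝ) * -t = t := by ring
      rwa [h1] at this
  rw [hkey]
  exact ⟨hw, hiw⟩
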